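/- Fix α > 0, c > 0 and R₀ > 0. Let μ be a finite nonnegative Borel measure on ℝ² supported in the closed ball B(0,R₀) such that μ(closedBall(0,r)) = c·r^α for every 0 ≤ r ≤ R₀. Then μ belongs to H^{−1}(ℝ²), i.e. ∫_{ℝ²} (1 + |ξ|²)^{−1} |μ̂(ξ)|² dξ < ∞, where μ̂(ξ) = ∫_{ℝ²} e^{−2πi⟨x,ξ⟩} dμ(x) is the Fourier transform of the measure μ. -/

import Mathlib

open MeasureTheory Set Metric
open scoped ENNReal Classical Real

/-- The plane `ℝ²` with the Euclidean norm. -/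
abbrev Plane := EuclideanSpace ℝ (Fin 2)

/-- The Fourier transform of a finite measure `μ` on `ℝ²`:
`μ̂(ξ) = ∫ e^{-2πi⟨x,ξ⟩} dμ(x)`. -/
noncomputable def fourierMeasure (μ : Measure Plane) (ξ : Plane) : ℂ :=
  ∫ x, Complex.exp (-(2 * Real.pi * (inner ℝ x ξ : ℝ)) * Complex.I) ∂μ

/-- A finite measure `μ` belongs to `H^{-1}(ℝ²)` if
`∫ (1+|ξ|²)⁻¹ |μ̂(ξ)|² dξ < ∞`. -/
noncomputable def memHminusOne (μ : Measure Plane) : Prop :=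
  ∫⁻ ξ : Plane, ENNReal.ofReal ((1 + ‖ξ‖ ^ 2)⁻¹ * ‖fourierMeasure μ ξ‖ ^ 2) < ⊤


open Real FourierTransform
open scoped RealInnerProductSpace

lemma aux_norm_exp_I (r : ℝ) : ‖Complex.exp ((r : ℂ) * Complex.I)‖ = 1 := by
  rw [Complex.norm_exp]
  simp

lemma aux_norm_exp_I' (r : ℝ) : ‖Complex.exp (-(r : ℂ) * Complex.I)‖ = 1 := by
  simpa using aux_norm_exp_I (-r)

lemma aux_fourier_norm_le (μ : Measure Plane) [IsFiniteMeasure μ] (ξ : Plane) :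
    ‖fourierMeasure μ ξ‖ ≤ (μ univ).toReal := by
  refine (norm_integral_le_integral_norm _).trans ?_
  have h : ∀ x : Plane, ‖Complex.exp (-(2 * (π:ℂ) * ((inner ℝ x ξ : ℝ):ℂ)) * Complex.I)‖ = 1 := by
    intro x
    have := aux_norm_exp_I' (2 * π * (inner ℝ x ξ : ℝ))
    simpa using this
  calc ∫ x, ‖Complex.exp (-(2 * (π:ℂ) * ((inner ℝ x ξ : ℝ):ℂ)) * Complex.I)‖ ∂μ
      = ∫ _x, (1:ℝ) ∂μ := by
        apply integral_congr_ae
        exact Filter.Eventually.of_forall h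
    _ = (μ univ).toReal := by simp; rfl
  exact le_rfl

lemma aux_fourier_cont (μ : Measure Plane) [IsFiniteMeasure μ] :
    Continuous (fourierMeasure μ) := by
  apply continuous_of_dominated (bound := fun _ => (1:ℝ))
  · intro ξ
    apply Continuous.aestronglyMeasurable
    apply Complex.continuous_exp.comp
    exact ((continuous_const.mul
      (Complex.continuous_ofReal.comp (continuous_inner.comp
        (continuous_id.prodMk continuous_const)))).neg).mul continuous_const
  · intro ξ
    apply Filter.Eventually.of_forall
    intro x
    have := aux_norm_exp_I' (2 * π * (inner ℝ x ξ : ℝ))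
    simp only [Complex.ofReal_mul, Complex.ofReal_ofNat] at this ⊢
    exact le_of_eq this
  · exact integrable_const 1
  · apply Filter.Eventually.of_forall
    intro x
    apply Complex.continuous_exp.comp
    exact ((continuous_const.mul
      (Complex.continuous_ofReal.comp (continuous_inner.comp
        (continuous_const.prodMk continuous_id)))).neg).mul continuous_const

lemma aux_cexp_norm (t : ℝ) (v : Plane) :
    ‖Complex.exp (-(t:ℂ) * (‖v‖:ℂ) ^ 2)‖ = rexp (-(t * ‖v‖ ^ 2)) := by
  rw [show (-(t:ℂ) * (‖v‖:ℂ) ^ 2) = ((-(t * ‖v‖ ^ 2) : ℝ) : ℂ) by push_cast; ring]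
  rw [Complex.norm_exp, Complex.ofReal_re]

lemma aux_gauss_identity (μ : Measure Plane) [IsFiniteMeasure μ] {t : ℝ} (ht : 0 < t) :
    ∫⁻ ξ : Plane, ENNReal.ofReal (rexp (-(t * ‖ξ‖ ^ 2)) * ‖fourierMeasure μ ξ‖ ^ 2)
      = ∫⁻ p : Plane × Plane,
          ENNReal.ofReal (π / t * rexp (-(π ^ 2 * ‖p.1 - p.2‖ ^ 2) / t)) ∂(μ.prod μ) := by
  set ν : Measure (Plane × Plane) := μ.prod μ with hν
  have hbt : (0:ℝ) < ((t:ℂ)).re := by simpa using ht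
  have hgaussC : Integrable (fun v : Plane => Complex.exp (-(t:ℂ) * ‖v‖ ^ 2)) volume := by
    have := GaussianFourier.integrable_cexp_neg_mul_sq_norm_add (V := Plane) hbt 0 (0 : Plane)
    simpa using this
  have hgaussR : Integrable (fun v : Plane => rexp (-(t * ‖v‖ ^ 2))) volume := by
    refine hgaussC.norm.congr (Filter.Eventually.of_forall fun v => ?_)
    exact aux_cexp_norm t v
  -- Step A
  have hstepA : ∀ ξ : Plane, ((‖fourierMeasure μ ξ‖ ^ 2 : ℝ) : ℂ) =
      ∫ p : Plane × Plane,
        Complex.exp (-(2 * (π:ℂ) * ((inner ℝ (p.1 - p.2) ξ : ℝ) : ℂ)) * Complex.I) ∂ν := by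
    intro ξ
    have hconj : (starRingEnd ℂ) (fourierMeasure μ ξ) =
        ∫ y, Complex.exp ((2 * (π:ℂ) * ((inner ℝ y ξ : ℝ):ℂ)) * Complex.I) ∂μ := by
      rw [fourierMeasure, ← integral_conj]
      refine integral_congr_ae (Filter.Eventually.of_forall fun y => ?_)
      simp only []
      rw [← Complex.exp_conj]
      congr 1
      simp only [map_mul, map_neg, Complex.conj_I, Complex.conj_ofReal, map_ofNat]
      ring
    have hsq : ((‖fourierMeasure μ ξ‖ ^ 2 : ℝ) : ℂ) =
        fourierMeasure μ ξ * (starRingEnd ℂ) (fourierMeasure μ ξ) := by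
      rw [Complex.mul_conj, Complex.normSq_eq_norm_sq]
    rw [hsq, hconj, fourierMeasure, ← integral_prod_mul]
    refine integral_congr_ae (Filter.Eventually.of_forall fun p => ?_)
    simp only []
    rw [← Complex.exp_add]
    congr 1
    have hinner : (inner ℝ (p.1 - p.2) ξ : ℝ) = (inner ℝ p.1 ξ : ℝ) - (inner ℝ p.2 ξ : ℝ) :=
      inner_sub_left _ _ _
    rw [hinner]
    push_cast
    ring
  -- Master integrability on the product
  have hGcont : Continuous (fun q : Plane × (Plane × Plane) =>
      Complex.exp (-(t:ℂ) * ‖q.1‖ ^ 2) *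
        Complex.exp (-(2 * (π:ℂ) * ((inner ℝ (q.2.1 - q.2.2) q.1 : ℝ):ℂ)) * Complex.I)) := by
    have hin : Continuous (fun q : Plane × (Plane × Plane) =>
        (inner ℝ (q.2.1 - q.2.2) q.1 : ℝ)) :=
      continuous_inner.comp (((continuous_fst.comp continuous_snd).sub
        (continuous_snd.comp continuous_snd)).prodMk continuous_fst)
    apply Continuous.mul
    · exact Complex.continuous_exp.comp (continuous_const.mul
        ((Complex.continuous_ofReal.comp (continuous_fst.norm)).pow 2))
    · exact Complex.continuous_exp.comp
        (((continuous_const.mul (Complex.continuous_ofReal.comp hin)).neg).mul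
          continuous_const)
  have hGint : Integrable (fun q : Plane × (Plane × Plane) =>
      Complex.exp (-(t:ℂ) * ‖q.1‖ ^ 2) *
        Complex.exp (-(2 * (π:ℂ) * ((inner ℝ (q.2.1 - q.2.2) q.1 : ℝ):ℂ)) * Complex.I))
      (volume.prod ν) := by
    have hbound : Integrable (fun q : Plane × (Plane × Plane) =>
        rexp (-(t * ‖q.1‖ ^ 2)) * (1:ℝ)) (volume.prod ν) :=
      hgaussR.mul_prod (integrable_const 1)
    apply Integrable.mono' (by simpa using hbound) hGcont.aestronglyMeasurable
    refine Filter.Eventually.of_forall fun q => ?_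
    rw [norm_mul, aux_cexp_norm t q.1]
    have h2 : ‖Complex.exp (-(2 * (π:ℂ) * ((inner ℝ (q.2.1 - q.2.2) q.1 : ℝ):ℂ)) * Complex.I)‖
        = 1 := by
      have := aux_norm_exp_I' (2 * π * (inner ℝ (q.2.1 - q.2.2) q.1 : ℝ))
      simpa using this
    rw [h2, mul_one]
  -- Step C : complex identity
  set A : ℝ := ∫ ξ : Plane, rexp (-(t * ‖ξ‖ ^ 2)) * ‖fourierMeasure μ ξ‖ ^ 2 with hA
  set B : ℝ := ∫ p : Plane × Plane, π / t * rexp (-(π ^ 2 * ‖p.1 - p.2‖ ^ 2) / t) ∂ν with hB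
  have hAB : A = B := by
    have hcast : (A : ℂ) = ∫ ξ : Plane, Complex.exp (-(t:ℂ) * ‖ξ‖ ^ 2) *
        ((‖fourierMeasure μ ξ‖ ^ 2 : ℝ) : ℂ) := by
      rw [hA]
      refine Eq.trans (integral_ofReal (𝕜 := ℂ)).symm ?_
      refine integral_congr_ae (Filter.Eventually.of_forall fun ξ => ?_)
      show ((rexp (-(t * ‖ξ‖ ^ 2)) * ‖fourierMeasure μ ξ‖ ^ 2 : ℝ) : ℂ) =
        Complex.exp (-(t:ℂ) * ‖ξ‖ ^ 2) * ((‖fourierMeasure μ ξ‖ ^ 2 : ℝ) : ℂ)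
      rw [Complex.ofReal_mul, Complex.ofReal_exp]
      congr 2
      push_cast
      ring
    have hswap : (A : ℂ) = ∫ p : Plane × Plane, (∫ ξ : Plane,
        Complex.exp (-(t:ℂ) * ‖ξ‖ ^ 2) *
          Complex.exp (-(2 * (π:ℂ) * ((inner ℝ (p.1 - p.2) ξ : ℝ):ℂ)) * Complex.I)) ∂ν := by
      rw [hcast]
      have hpt : ∀ ξ : Plane, Complex.exp (-(t:ℂ) * ‖ξ‖ ^ 2) *
          ((‖fourierMeasure μ ξ‖ ^ 2 : ℝ) : ℂ) = ∫ p : Plane × Plane,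
            Complex.exp (-(t:ℂ) * ‖ξ‖ ^ 2) *
              Complex.exp (-(2 * (π:ℂ) * ((inner ℝ (p.1 - p.2) ξ : ℝ):ℂ)) * Complex.I) ∂ν := by
        intro ξ
        rw [hstepA ξ, integral_const_mul]
      rw [integral_congr_ae (Filter.Eventually.of_forall hpt)]
      exact integral_integral_swap hGint
    have hFT : ∀ w : Plane, (∫ ξ : Plane,
        Complex.exp (-(t:ℂ) * ‖ξ‖ ^ 2) *
          Complex.exp (-(2 * (π:ℂ) * ((inner ℝ w ξ : ℝ):ℂ)) * Complex.I))
        = ((π:ℂ) / t) * Complex.exp (-(π:ℂ) ^ 2 * ‖w‖ ^ 2 / t) := by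
      intro w
      have h := fourier_gaussian_innerProductSpace (V := Plane) (b := (t:ℂ)) hbt w
      rw [Real.fourier_eq'] at h
      have hrank : ((Module.finrank ℝ Plane : ℂ)) / 2 = 1 := by
        rw [finrank_euclideanSpace_fin]
        norm_num
      rw [hrank, Complex.cpow_one] at h
      rw [← h]
      refine integral_congr_ae (Filter.Eventually.of_forall fun v => ?_)
      simp only [smul_eq_mul]
      rw [mul_comm]
      congr 2
      push_cast
      rw [real_inner_comm w v]
      ring
    have hcast2 : (∫ p : Plane × Plane, ((π:ℂ) / t) *
        Complex.exp (-(π:ℂ) ^ 2 * ‖p.1 - p.2‖ ^ 2 / t) ∂ν) = ((B:ℝ) : ℂ) := by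
      rw [hB]
      refine Eq.trans ?_ (integral_ofReal (𝕜 := ℂ))
      refine integral_congr_ae (Filter.Eventually.of_forall fun p => ?_)
      show ((π:ℂ)/t) * Complex.exp (-(π:ℂ)^2 * (‖p.1 - p.2‖:ℂ)^2 / t) =
        ((π / t * rexp (-(π ^ 2 * ‖p.1 - p.2‖ ^ 2) / t) : ℝ) : ℂ)
      rw [Complex.ofReal_mul, Complex.ofReal_exp, Complex.ofReal_div]
      congr 2
      push_cast
      ring
    have hfin : (A : ℂ) = ((B:ℝ):ℂ) := by
      rw [hswap, ← hcast2]
      exact integral_congr_ae (Filter.Eventually.of_forall fun p => hFT (p.1 - p.2))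
    exact_mod_cast hfin
  -- Step D : both sides as lintegrals
  have hintA : Integrable (fun ξ : Plane =>
      rexp (-(t * ‖ξ‖ ^ 2)) * ‖fourierMeasure μ ξ‖ ^ 2) volume := by
    apply Integrable.mono' (hgaussR.mul_const ((μ univ).toReal ^ 2))
    · exact ((Real.continuous_exp.comp ((continuous_const.mul
        (continuous_norm.pow 2)).neg)).mul
        (((aux_fourier_cont μ).norm).pow 2)).aestronglyMeasurable
    · refine Filter.Eventually.of_forall fun ξ => ?_
      rw [Real.norm_eq_abs, abs_of_nonneg (by positivity)]
      apply mul_le_mul_of_nonneg_left _ (Real.exp_pos _).le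
      have h1 := aux_fourier_norm_le μ ξ
      have h0 := norm_nonneg (fourierMeasure μ ξ)
      nlinarith
  have hintB : Integrable (fun p : Plane × Plane =>
      π / t * rexp (-(π ^ 2 * ‖p.1 - p.2‖ ^ 2) / t)) ν := by
    apply Integrable.mono' (integrable_const (π / t))
    · apply Continuous.aestronglyMeasurable
      apply Continuous.mul continuous_const
      apply Real.continuous_exp.comp
      exact ((continuous_const.mul
        ((continuous_fst.sub continuous_snd).norm.pow 2)).neg).div_const t
    · refine Filter.Eventually.of_forall fun p => ?_
      rw [Real.norm_eq_abs, abs_of_nonneg (by positivity)]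
      have h1 : rexp (-(π ^ 2 * ‖p.1 - p.2‖ ^ 2) / t) ≤ 1 := by
        apply Real.exp_le_one_iff.mpr
        apply div_nonpos_of_nonpos_of_nonneg _ ht.le
        exact neg_nonpos.mpr (by positivity)
      have hπt : 0 ≤ π / t := by positivity
      exact mul_le_of_le_one_right hπt h1
  have hnnA : 0 ≤ᵐ[volume] fun ξ : Plane =>
      rexp (-(t * ‖ξ‖ ^ 2)) * ‖fourierMeasure μ ξ‖ ^ 2 :=
    Filter.Eventually.of_forall fun ξ => by positivity
  have hnnB : 0 ≤ᵐ[ν] fun p : Plane × Plane =>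
      π / t * rexp (-(π ^ 2 * ‖p.1 - p.2‖ ^ 2) / t) :=
    Filter.Eventually.of_forall fun p => by positivity
  rw [← ofReal_integral_eq_lintegral_ofReal hintA hnnA,
    ← ofReal_integral_eq_lintegral_ofReal hintB hnnB, ← hA, ← hB, hAB]


lemma aux_rpow_add_le {a b q : ℝ} (ha : 0 ≤ a) (hb : 0 ≤ b) (h0 : 0 ≤ q) (h1 : q ≤ 1) :
    (a + b) ^ q ≤ a ^ q + b ^ q := by
  have key := NNReal.rpow_add_le_add_rpow a.toNNReal b.toNNReal h0 h1
  have := NNReal.coe_le_coe.2 key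
  push_cast at this
  rwa [Real.coe_toNNReal _ ha, Real.coe_toNNReal _ hb] at this

lemma aux_rpow_sub_rpow {p m α R₀ : ℝ} (hp : 0 ≤ p) (hpm : p ≤ m) (hm : m ≤ R₀)
    (hα : 1 ≤ α) : m ^ α - p ^ α ≤ α * R₀ ^ (α - 1) * (m - p) := by
  rcases eq_or_lt_of_le (hp.trans hpm) with hm0 | hm0
  · have hp0 : p = 0 := le_antisymm (hpm.trans hm0.symm.le) hp
    rw [← hm0, hp0, Real.zero_rpow (by positivity : α ≠ 0)]
    simp
  · set u : ℝ := p / m with hu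
    have hu0 : 0 ≤ u := div_nonneg hp hm0.le
    have hu1 : u ≤ 1 := div_le_one_of_le₀ hpm hm0.le
    have hber := one_add_mul_self_le_rpow_one_add (s := u - 1) (by linarith) hα
    rw [add_sub_cancel] at hber
    -- hber : 1 + α * (u - 1) ≤ u ^ α
    have hpmu : p = m * u := by rw [hu]; field_simp
    have hpow : p ^ α = m ^ α * u ^ α := by
      rw [hpmu, Real.mul_rpow hm0.le hu0]
    have hm1 : m ^ α = m ^ (α - 1) * m := by
      rw [← Real.rpow_add_one hm0.ne' (α - 1), sub_add_cancel]
    have hRm : m ^ (α - 1) ≤ R₀ ^ (α - 1) :=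
      Real.rpow_le_rpow hm0.le hm (by linarith)
    have hmα : 0 ≤ m ^ (α - 1) := Real.rpow_nonneg hm0.le _
    have key : m ^ α - p ^ α ≤ α * (m ^ (α - 1) * (m - p)) := by
      rw [hpow]
      have h1 : m ^ α * (1 - u ^ α) ≤ m ^ α * (α * (1 - u)) := by
        apply mul_le_mul_of_nonneg_left _ (Real.rpow_nonneg hm0.le α)
        nlinarith
      have h2 : m ^ α * (α * (1 - u)) = α * (m ^ (α - 1) * (m - p)) := by
        rw [hm1, hpmu]; ring
      nlinarith
    have hmp : 0 ≤ m - p := by linarith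
    nlinarith [mul_le_mul_of_nonneg_right hRm hmp, hα]

lemma aux_key_real {α R₀ : ℝ} (hα : 0 < α) (hR₀ : 0 < R₀) :
    ∃ K : ℝ, 0 < K ∧ ∀ p m r : ℝ, 0 ≤ p → p ≤ m → m ≤ R₀ → 0 < r → m ≤ p + 2 * r →
      m ^ α - p ^ α ≤ K * r ^ min α 1 := by
  rcases le_or_gt α 1 with h1 | h1
  · refine ⟨2 ^ α, Real.rpow_pos_of_pos two_pos α, fun p m r hp hpm hm hr hmp => ?_⟩
    rw [min_eq_left h1]
    have h2 : m ^ α ≤ (p + 2 * r) ^ α := Real.rpow_le_rpow (by linarith) hmp hα.le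
    have h3 : (p + 2 * r) ^ α ≤ p ^ α + (2 * r) ^ α :=
      aux_rpow_add_le hp (by linarith) hα.le h1
    have h4 : (2 * r) ^ α = 2 ^ α * r ^ α := Real.mul_rpow (by norm_num) hr.le
    linarith
  · refine ⟨2 * α * R₀ ^ (α - 1), by positivity, fun p m r hp hpm hm hr hmp => ?_⟩
    rw [min_eq_right h1.le, Real.rpow_one]
    have h2 := aux_rpow_sub_rpow hp hpm hm h1.le
    have h3 : 0 ≤ α * R₀ ^ (α - 1) := by positivity
    nlinarith


section Aux
variable {α c R₀ : ℝ} {μ : Measure Plane}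

-- open ball values
lemma aux_open_ball (hα : 0 < α) (hc : 0 < c) [IsFiniteMeasure μ]
    (hball : ∀ r : ℝ, 0 ≤ r → r ≤ R₀ →
      μ (Metric.closedBall (0 : Plane) r) = ENNReal.ofReal (c * r ^ α))
    {p : ℝ} (hp : 0 ≤ p) (hpR : p ≤ R₀) :
    μ (Metric.ball (0 : Plane) p) = ENNReal.ofReal (c * p ^ α) := by
  rcases eq_or_lt_of_le hp with hp0 | hp0
  · rw [← hp0]
    simp [Real.zero_rpow hα.ne']
  · apply le_antisymm
    · rw [← hball p hp hpR]
      exact measure_mono ball_subset_closedBall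
    · set q : ℕ → ℝ := fun n => p - p * (1 / (n + 1)) with hq
      have hq_le : ∀ n : ℕ, ENNReal.ofReal (c * q n ^ α) ≤ μ (Metric.ball (0 : Plane) p) := by
        intro n
        have h1 : (0:ℝ) < 1 / ((n:ℝ) + 1) := by positivity
        have h2 : 1 / ((n:ℝ) + 1) ≤ 1 := by
          rw [div_le_one (by positivity)]; linarith [Nat.cast_nonneg (α := ℝ) n]
        have hqn0 : 0 ≤ q n := by
          simp only [hq]; nlinarith
        have hqnp : q n < p := by
          simp only [hq]; nlinarith
        rw [← hball (q n) hqn0 (by linarith)]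
        exact measure_mono (closedBall_subset_ball hqnp)
      have htend : Filter.Tendsto (fun n : ℕ => ENNReal.ofReal (c * q n ^ α))
          Filter.atTop (nhds (ENNReal.ofReal (c * p ^ α))) := by
        have hqt : Filter.Tendsto q Filter.atTop (nhds p) := by
          have : Filter.Tendsto (fun n : ℕ => 1 / ((n:ℝ) + 1)) Filter.atTop (nhds 0) :=
            tendsto_one_div_add_atTop_nhds_zero_nat
          have := ((this.const_mul p).const_sub p)
          simpa [hq] using this
        have hcont : ContinuousAt (fun x : ℝ => ENNReal.ofReal (c * x ^ α)) p :=
          (ENNReal.continuous_ofReal.continuousAt).comp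
            ((continuousAt_const.mul (Real.continuousAt_rpow_const p α (Or.inl hp0.ne'))))
        exact hcont.tendsto.comp hqt
      exact le_of_tendsto htend (Filter.Eventually.of_forall hq_le)

lemma aux_ball_bound (hα : 0 < α) (hc : 0 < c) (hR₀ : 0 < R₀) [IsFiniteMeasure μ]
    (hsupp : μ (Metric.closedBall (0 : Plane) R₀)ᶜ = 0)
    (hball : ∀ r : ℝ, 0 ≤ r → r ≤ R₀ →
      μ (Metric.closedBall (0 : Plane) r) = ENNReal.ofReal (c * r ^ α)) :
    ∃ C : ℝ, 0 < C ∧ ∀ (x : Plane) (r : ℝ), 0 < r →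
      μ (Metric.closedBall x r) ≤ ENNReal.ofReal (C * r ^ min α 1) := by
  obtain ⟨K, hK, hKey⟩ := aux_key_real hα hR₀
  refine ⟨c * K, by positivity, fun x r hr => ?_⟩
  by_cases hRx : R₀ < ‖x‖ - r
  · have hsub : Metric.closedBall x r ⊆ (Metric.closedBall (0 : Plane) R₀)ᶜ := by
      intro y hy
      simp only [mem_closedBall, mem_compl_iff, not_le, dist_zero_right] at *
      have h1 : ‖x‖ ≤ ‖y‖ + dist y x := by
        calc ‖x‖ = dist x 0 := (dist_zero_right x).symm
        _ ≤ dist x y + dist y 0 := dist_triangle _ _ _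
        _ = ‖y‖ + dist y x := by rw [dist_comm x y, dist_zero_right]; ring
      linarith
    calc μ (Metric.closedBall x r) ≤ μ (Metric.closedBall (0 : Plane) R₀)ᶜ := measure_mono hsub
    _ = 0 := hsupp
    _ ≤ _ := zero_le
  · push_neg at hRx
    set p : ℝ := max (‖x‖ - r) 0 with hp
    set m : ℝ := min (‖x‖ + r) R₀ with hm
    have hp0 : 0 ≤ p := le_max_right _ _
    have hm0 : 0 ≤ m := le_min (by positivity) hR₀.le
    have hpm : p ≤ m := by
      apply max_le _ hm0
      apply le_min (by linarith) hRx
    have hmR : m ≤ R₀ := min_le_right _ _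
    have hxp : ‖x‖ ≤ p + r := by
      have := le_max_left (‖x‖ - r) 0
      linarith
    have hm2r : m ≤ p + 2 * r := by
      have : m ≤ ‖x‖ + r := min_le_left _ _
      linarith
    have hsub : Metric.closedBall x r ⊆
        (Metric.closedBall (0 : Plane) m \ Metric.ball (0 : Plane) p) ∪
          (Metric.closedBall (0 : Plane) R₀)ᶜ := by
      intro y hy
      simp only [mem_closedBall] at hy
      by_cases hyR : dist y (0 : Plane) ≤ R₀
      · left
        constructor
        · simp only [mem_closedBall]
          apply le_min _ hyR
          calc dist y (0 : Plane) ≤ dist y x + dist x 0 := dist_triangle _ _ _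
          _ ≤ r + ‖x‖ := by rw [dist_zero_right]; linarith [dist_comm y x ▸ hy]
          _ = ‖x‖ + r := by ring
        · simp only [mem_ball, not_lt]
          apply max_le _ dist_nonneg
          have : ‖x‖ = dist x (0:Plane) := (dist_zero_right x).symm
          have h2 : dist x (0:Plane) ≤ dist x y + dist y 0 := dist_triangle _ _ _
          rw [dist_comm x y] at h2
          linarith
      · right
        simp only [mem_compl_iff, mem_closedBall]
        exact hyR
    have hdiff : μ (Metric.closedBall (0 : Plane) m \ Metric.ball (0 : Plane) p)
        = ENNReal.ofReal (c * m ^ α) - ENNReal.ofReal (c * p ^ α) := by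
      rw [measure_diff (ball_subset_closedBall.trans (closedBall_subset_closedBall hpm))
        measurableSet_ball.nullMeasurableSet (measure_ne_top μ _),
        hball m hm0 hmR, aux_open_ball hα hc hball hp0 (hpm.trans hmR)]
    calc μ (Metric.closedBall x r)
        ≤ μ ((Metric.closedBall (0 : Plane) m \ Metric.ball (0 : Plane) p) ∪
          (Metric.closedBall (0 : Plane) R₀)ᶜ) := measure_mono hsub
      _ ≤ μ (Metric.closedBall (0 : Plane) m \ Metric.ball (0 : Plane) p) +
          μ (Metric.closedBall (0 : Plane) R₀)ᶜ := measure_union_le _ _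
      _ = ENNReal.ofReal (c * m ^ α) - ENNReal.ofReal (c * p ^ α) := by
          rw [hdiff, hsupp, add_zero]
      _ = ENNReal.ofReal (c * m ^ α - c * p ^ α) := by
          rw [ENNReal.ofReal_sub _ (by positivity)]
      _ ≤ ENNReal.ofReal (c * K * r ^ min α 1) := by
          apply ENNReal.ofReal_le_ofReal
          have := hKey p m r hp0 hpm hmR hr hm2r
          nlinarith

lemma aux_no_atom {C β : ℝ} (hβ : 0 < β)
    (hbd : ∀ (x : Plane) (r : ℝ), 0 < r →
      μ (Metric.closedBall x r) ≤ ENNReal.ofReal (C * r ^ β)) (x : Plane) :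
    μ {x} = 0 := by
  have h1 : ∀ n : ℕ, μ {x} ≤ ENNReal.ofReal (C * (1 / ((n:ℝ) + 1)) ^ β) := by
    intro n
    have hr : (0:ℝ) < 1 / ((n:ℝ) + 1) := by positivity
    refine le_trans (measure_mono ?_) (hbd x _ hr)
    intro y hy
    simp only [mem_singleton_iff] at hy
    simp only [hy, mem_closedBall, dist_self]
    positivity
  have htend : Filter.Tendsto (fun n : ℕ => ENNReal.ofReal (C * (1 / ((n:ℝ) + 1)) ^ β))
      Filter.atTop (nhds 0) := by
    have h0 : Filter.Tendsto (fun n : ℕ => 1 / ((n:ℝ) + 1)) Filter.atTop (nhds 0) :=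
      tendsto_one_div_add_atTop_nhds_zero_nat
    have hcont : ContinuousAt (fun u : ℝ => ENNReal.ofReal (C * u ^ β)) 0 :=
      (ENNReal.continuous_ofReal.continuousAt).comp
        (continuousAt_const.mul (Real.continuousAt_rpow_const 0 β (Or.inr hβ.le)))
    have := hcont.tendsto.comp h0
    simpa [Real.zero_rpow hβ.ne', Function.comp_def] using this
  have := ge_of_tendsto htend (Filter.Eventually.of_forall h1)
  simpa using this

lemma aux_energy {C β : ℝ} (hC : 0 < C) (hβ0 : 0 < β) (hβ1 : β ≤ 1) [IsFiniteMeasure μ]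
    (hbd : ∀ (x : Plane) (r : ℝ), 0 < r →
      μ (Metric.closedBall x r) ≤ ENNReal.ofReal (C * r ^ β)) :
    ∃ E : ℝ≥0∞, E < ⊤ ∧ ∀ x : Plane,
      ∫⁻ y, ENNReal.ofReal (‖x - y‖ ^ (-(β / 2))) ∂μ ≤ E := by
  set σ : ℝ := β / 2 with hσ
  have hσ0 : 0 < σ := by positivity
  set T : ℝ≥0∞ := ∫⁻ t in Ioi (1:ℝ), ENNReal.ofReal (C * t ^ (-2:ℝ)) with hT
  have hTfin : T < ⊤ := by
    have hint : IntegrableOn (fun t : ℝ => C * t ^ (-2:ℝ)) (Ioi 1) := by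
      exact (integrableOn_Ioi_rpow_of_lt (by norm_num) one_pos).const_mul C
    have hnn : 0 ≤ᵐ[volume.restrict (Ioi (1:ℝ))] fun t : ℝ => C * t ^ (-2:ℝ) := by
      filter_upwards [ae_restrict_mem measurableSet_Ioi] with t ht
      have : (0:ℝ) < t := lt_trans one_pos ht
      positivity
    rw [hT, ← ofReal_integral_eq_lintegral_ofReal hint hnn]
    exact ENNReal.ofReal_lt_top
  refine ⟨μ univ + T, by
    have := measure_lt_top μ univ
    exact ENNReal.add_lt_top.2 ⟨this, hTfin⟩, fun x => ?_⟩
  have hmeas : AEMeasurable (fun y : Plane => ‖x - y‖ ^ (-σ)) μ :=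
    (((measurable_const.sub measurable_id).norm).pow measurable_const).aemeasurable
  have hnn : 0 ≤ᵐ[μ] fun y : Plane => ‖x - y‖ ^ (-σ) :=
    Filter.Eventually.of_forall fun y => Real.rpow_nonneg (norm_nonneg _) _
  rw [lintegral_eq_lintegral_meas_lt μ hnn hmeas]
  have hsub : ∀ t : ℝ, 0 < t →
      {y : Plane | t < ‖x - y‖ ^ (-σ)} ⊆ Metric.closedBall x (t ^ (-σ⁻¹)) := by
    intro t ht y hy
    simp only [mem_setOf_eq] at hy
    have hd0 : 0 < ‖x - y‖ := by
      rcases eq_or_lt_of_le (norm_nonneg (x - y)) with h | h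
      · rw [← h, Real.zero_rpow (by simpa using hσ0.ne' : -σ ≠ 0)] at hy; linarith
      · exact h
    have hkey : ‖x - y‖ < t ^ (-σ⁻¹) := by
      have h2 : (‖x - y‖ ^ (-σ)) ^ (-σ⁻¹) < t ^ (-σ⁻¹) :=
        Real.rpow_lt_rpow_of_neg ht hy (neg_lt_zero.mpr (inv_pos.mpr hσ0))
      have h3 : (‖x - y‖ ^ (-σ)) ^ (-σ⁻¹) = ‖x - y‖ := by
        rw [← Real.rpow_mul (norm_nonneg _), neg_mul_neg, mul_inv_cancel₀ hσ0.ne',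
          Real.rpow_one]
      rwa [h3] at h2
    simp only [mem_closedBall]
    rw [dist_comm, dist_eq_norm]
    exact hkey.le
  rw [← Ioc_union_Ioi_eq_Ioi (zero_le_one), lintegral_union measurableSet_Ioi
    (Ioc_disjoint_Ioi le_rfl)]
  gcongr
  · calc ∫⁻ t in Ioc (0:ℝ) 1, μ {y : Plane | t < ‖x - y‖ ^ (-σ)}
        ≤ ∫⁻ _ in Ioc (0:ℝ) 1, μ univ :=
          setLIntegral_mono' measurableSet_Ioc fun t _ => measure_mono (subset_univ _)
      _ = μ univ := by
          rw [setLIntegral_const, Real.volume_Ioc]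
          simp
  · apply setLIntegral_mono' measurableSet_Ioi
    intro t ht
    simp only [mem_Ioi] at ht
    have ht0 : (0:ℝ) < t := lt_trans one_pos ht
    calc μ {y : Plane | t < ‖x - y‖ ^ (-σ)}
        ≤ μ (Metric.closedBall x (t ^ (-σ⁻¹))) := measure_mono (hsub t ht0)
      _ ≤ ENNReal.ofReal (C * (t ^ (-σ⁻¹)) ^ β) := hbd x _ (Real.rpow_pos_of_pos ht0 _)
      _ = ENNReal.ofReal (C * t ^ (-2:ℝ)) := by
          rw [← Real.rpow_mul ht0.le]
          congr 2
          rw [hσ]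
          field_simp

lemma aux_exp_neg_le_rpow {u s : ℝ} (hu : 0 < u) (hs : 0 < s) (hs1 : s ≤ 1) :
    rexp (-u) ≤ u ^ (-s) := by
  rw [Real.rpow_neg hu.le, Real.exp_neg]
  apply inv_anti₀ (Real.rpow_pos_of_pos hu s)
  rcases le_or_gt 1 u with h | h
  · calc u ^ s ≤ u ^ (1:ℝ) := Real.rpow_le_rpow_of_exponent_le h hs1
    _ = u := Real.rpow_one u
    _ ≤ rexp u := by linarith [Real.add_one_le_exp u]
  · calc u ^ s ≤ 1 := Real.rpow_le_one hu.le h.le hs.le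
    _ ≤ rexp u := by linarith [Real.add_one_le_exp u, hu]

lemma aux_exp_lintegral {b : ℝ} (hb : 0 < b) :
    ∫⁻ t in Ioi (0:ℝ), ENNReal.ofReal (rexp (-(b * t))) = ENNReal.ofReal b⁻¹ := by
  have hint : IntegrableOn (fun t : ℝ => rexp (-(b * t))) (Ioi 0) := by
    simpa [neg_mul] using exp_neg_integrableOn_Ioi 0 hb
  rw [← ofReal_integral_eq_lintegral_ofReal hint
    (Filter.Eventually.of_forall fun t => (Real.exp_pos _).le)]
  congr 1
  have h := integral_comp_mul_left_Ioi (fun x => rexp (-x)) 0 hb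
  simp only [mul_zero] at h
  rw [h, integral_exp_neg_Ioi, neg_zero, Real.exp_zero, smul_eq_mul, mul_one]

lemma aux_gamma_fin {s : ℝ} (hs : 0 < s) :
    ∫⁻ t in Ioi (0:ℝ), ENNReal.ofReal (rexp (-t) * t ^ (s - 1)) < ⊤ := by
  have hint := Real.GammaIntegral_convergent hs
  have hnn : 0 ≤ᵐ[volume.restrict (Ioi (0:ℝ))] fun t : ℝ => rexp (-t) * t ^ (s - 1) := by
    filter_upwards [ae_restrict_mem measurableSet_Ioi] with t ht
    have : (0:ℝ) < t := ht
    positivity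
  rw [← ofReal_integral_eq_lintegral_ofReal hint hnn]
  exact ENNReal.ofReal_lt_top

lemma aux_kernel_bound {s d : ℝ} (hs : 0 < s) (hs1 : s ≤ 1) (hd : 0 < d) :
    ∫⁻ t in Ioi (0:ℝ), ENNReal.ofReal (rexp (-t) * (π / t * rexp (-(π^2 * d^2) / t)))
      ≤ ENNReal.ofReal (π * (π^2 * d^2) ^ (-s)) *
        ∫⁻ t in Ioi (0:ℝ), ENNReal.ofReal (rexp (-t) * t ^ (s - 1)) := by
  set a : ℝ := π^2 * d^2 with ha
  have ha0 : 0 < a := by positivity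
  rw [← lintegral_const_mul' _ _ ENNReal.ofReal_ne_top]
  apply setLIntegral_mono' measurableSet_Ioi
  intro t ht
  simp only [mem_Ioi] at ht
  rw [← ENNReal.ofReal_mul (by positivity)]
  apply ENNReal.ofReal_le_ofReal
  have h1 : rexp (-(a / t)) ≤ (a / t) ^ (-s) :=
    aux_exp_neg_le_rpow (by positivity) hs hs1
  have h2 : (a / t) ^ (-s) = a ^ (-s) * t ^ s := by
    rw [Real.div_rpow ha0.le ht.le, div_eq_mul_inv, Real.rpow_neg ht.le, inv_inv]
  have h3 : t ^ (s - 1) = t ^ s / t := by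
    rw [Real.rpow_sub ht, Real.rpow_one]
  calc rexp (-t) * (π / t * rexp (-a / t))
      = (rexp (-t) * π / t) * rexp (-(a / t)) := by rw [neg_div]; ring
    _ ≤ (rexp (-t) * π / t) * (a ^ (-s) * t ^ s) := by
        apply mul_le_mul_of_nonneg_left _ (by positivity)
        rw [← h2]; exact h1
    _ = π * a ^ (-s) * (rexp (-t) * t ^ (s - 1)) := by
        rw [h3]; field_simp

theorem aux_main (α c R₀ : ℝ)
    (hα : 0 < α) (hc : 0 < c) (hR₀ : 0 < R₀)
    (μ : Measure Plane) [IsFiniteMeasure μ]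
    (hsupp : μ (Metric.closedBall (0 : Plane) R₀)ᶜ = 0)
    (hball : ∀ r : ℝ, 0 ≤ r → r ≤ R₀ →
      μ (Metric.closedBall (0 : Plane) r) = ENNReal.ofReal (c * r ^ α)) :
    (∫⁻ ξ : Plane, ENNReal.ofReal ((1 + ‖ξ‖ ^ 2)⁻¹ * ‖fourierMeasure μ ξ‖ ^ 2)) < ⊤ := by
  obtain ⟨C, hC, hbd⟩ := aux_ball_bound hα hc hR₀ hsupp hball
  have hβ0 : 0 < min α 1 := lt_min hα one_pos
  have hβ1 : min α 1 ≤ 1 := min_le_right _ _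
  obtain ⟨E, hE, hEnergy⟩ := aux_energy hC hβ0 hβ1 hbd
  set β : ℝ := min α 1 with hβ
  set s : ℝ := β / 4 with hs
  have hs0 : 0 < s := by positivity
  have hs1 : s ≤ 1 := by rw [hs]; linarith
  set ν : Measure (Plane × Plane) := μ.prod μ with hν
  set Γ : ℝ≥0∞ := ∫⁻ u in Ioi (0:ℝ), ENNReal.ofReal (rexp (-u) * u ^ (s - 1)) with hΓ
  have hΓfin : Γ < ⊤ := aux_gamma_fin hs0
  set c0 : ℝ≥0∞ := ENNReal.ofReal (π * (π ^ 2) ^ (-s)) * Γ with hc0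
  have hc0fin : c0 ≠ ⊤ := ENNReal.mul_ne_top ENNReal.ofReal_ne_top hΓfin.ne
  -- Step 1 : subordination
  have step1 : ∀ ξ : Plane, ENNReal.ofReal ((1 + ‖ξ‖ ^ 2)⁻¹ * ‖fourierMeasure μ ξ‖ ^ 2)
      = ∫⁻ t in Ioi (0:ℝ),
          ENNReal.ofReal (rexp (-((1 + ‖ξ‖ ^ 2) * t)) * ‖fourierMeasure μ ξ‖ ^ 2) := by
    intro ξ
    have hb : (0:ℝ) < 1 + ‖ξ‖ ^ 2 := by positivity
    calc ENNReal.ofReal ((1 + ‖ξ‖ ^ 2)⁻¹ * ‖fourierMeasure μ ξ‖ ^ 2)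
        = ENNReal.ofReal ((1 + ‖ξ‖ ^ 2)⁻¹) * ENNReal.ofReal (‖fourierMeasure μ ξ‖ ^ 2) :=
          ENNReal.ofReal_mul (by positivity)
      _ = (∫⁻ t in Ioi (0:ℝ), ENNReal.ofReal (rexp (-((1 + ‖ξ‖ ^ 2) * t)))) *
          ENNReal.ofReal (‖fourierMeasure μ ξ‖ ^ 2) := by rw [aux_exp_lintegral hb]
      _ = ∫⁻ t in Ioi (0:ℝ), ENNReal.ofReal (rexp (-((1 + ‖ξ‖ ^ 2) * t))) *
          ENNReal.ofReal (‖fourierMeasure μ ξ‖ ^ 2) :=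
          (lintegral_mul_const' _ _ ENNReal.ofReal_ne_top).symm
      _ = _ := by
          apply lintegral_congr
          intro t
          rw [← ENNReal.ofReal_mul (Real.exp_pos _).le]
  simp_rw [step1]
  -- Step 2 : swap ξ and t
  have hswap1 : (∫⁻ ξ : Plane, ∫⁻ t in Ioi (0:ℝ),
        ENNReal.ofReal (rexp (-((1 + ‖ξ‖ ^ 2) * t)) * ‖fourierMeasure μ ξ‖ ^ 2))
      = ∫⁻ t in Ioi (0:ℝ), ∫⁻ ξ : Plane,
          ENNReal.ofReal (rexp (-((1 + ‖ξ‖ ^ 2) * t)) * ‖fourierMeasure μ ξ‖ ^ 2) := by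
    apply lintegral_lintegral_swap
    apply Measurable.aemeasurable
    apply ENNReal.measurable_ofReal.comp
    apply Measurable.mul
    · exact (Real.continuous_exp.comp (((continuous_const.add
        ((continuous_norm.comp continuous_fst).pow 2)).mul continuous_snd).neg)).measurable
    · exact (((aux_fourier_cont μ).norm.pow 2).comp continuous_fst).measurable
  rw [hswap1]
  -- Step 3 : Gaussian identity for each t
  have step3 : ∫⁻ t in Ioi (0:ℝ), ∫⁻ ξ : Plane,
        ENNReal.ofReal (rexp (-((1 + ‖ξ‖ ^ 2) * t)) * ‖fourierMeasure μ ξ‖ ^ 2)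
      = ∫⁻ t in Ioi (0:ℝ), ∫⁻ p : Plane × Plane,
          ENNReal.ofReal (rexp (-t) * (π / t * rexp (-(π ^ 2 * ‖p.1 - p.2‖ ^ 2) / t))) ∂ν := by
    apply setLIntegral_congr_fun measurableSet_Ioi
    intro t ht
    have ht0 : (0:ℝ) < t := ht
    have e1 : ∀ ξ : Plane, ENNReal.ofReal (rexp (-((1 + ‖ξ‖ ^ 2) * t)) *
        ‖fourierMeasure μ ξ‖ ^ 2) = ENNReal.ofReal (rexp (-t)) *
          ENNReal.ofReal (rexp (-(t * ‖ξ‖ ^ 2)) * ‖fourierMeasure μ ξ‖ ^ 2) := by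
      intro ξ
      rw [← ENNReal.ofReal_mul (Real.exp_pos _).le]
      congr 1
      rw [show -((1 + ‖ξ‖ ^ 2) * t) = -t + -(t * ‖ξ‖ ^ 2) by ring, Real.exp_add]
      ring
    calc ∫⁻ ξ : Plane, ENNReal.ofReal (rexp (-((1 + ‖ξ‖ ^ 2) * t)) * ‖fourierMeasure μ ξ‖ ^ 2)
        = ∫⁻ ξ : Plane, ENNReal.ofReal (rexp (-t)) *
            ENNReal.ofReal (rexp (-(t * ‖ξ‖ ^ 2)) * ‖fourierMeasure μ ξ‖ ^ 2) :=
          lintegral_congr e1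
      _ = ENNReal.ofReal (rexp (-t)) * ∫⁻ ξ : Plane,
            ENNReal.ofReal (rexp (-(t * ‖ξ‖ ^ 2)) * ‖fourierMeasure μ ξ‖ ^ 2) :=
          lintegral_const_mul' _ _ ENNReal.ofReal_ne_top
      _ = ENNReal.ofReal (rexp (-t)) * ∫⁻ p : Plane × Plane,
            ENNReal.ofReal (π / t * rexp (-(π ^ 2 * ‖p.1 - p.2‖ ^ 2) / t)) ∂ν := by
          rw [aux_gauss_identity μ ht0]
      _ = ∫⁻ p : Plane × Plane, ENNReal.ofReal (rexp (-t)) *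
            ENNReal.ofReal (π / t * rexp (-(π ^ 2 * ‖p.1 - p.2‖ ^ 2) / t)) ∂ν :=
          (lintegral_const_mul' _ _ ENNReal.ofReal_ne_top).symm
      _ = _ := by
          apply lintegral_congr
          intro p
          rw [← ENNReal.ofReal_mul (Real.exp_pos _).le]
  rw [step3]
  -- Step 4 : swap t and p
  have hswap2 : (∫⁻ t in Ioi (0:ℝ), ∫⁻ p : Plane × Plane,
        ENNReal.ofReal (rexp (-t) * (π / t * rexp (-(π ^ 2 * ‖p.1 - p.2‖ ^ 2) / t))) ∂ν)
      = ∫⁻ p : Plane × Plane, (∫⁻ t in Ioi (0:ℝ),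
          ENNReal.ofReal (rexp (-t) * (π / t * rexp (-(π ^ 2 * ‖p.1 - p.2‖ ^ 2) / t)))) ∂ν := by
    apply lintegral_lintegral_swap
    apply Measurable.aemeasurable
    apply ENNReal.measurable_ofReal.comp
    apply Measurable.mul
    · exact Real.measurable_exp.comp measurable_fst.neg
    · apply Measurable.mul
      · exact measurable_const.div measurable_fst
      · apply Real.measurable_exp.comp
        apply Measurable.div _ measurable_fst
        exact (measurable_const.mul ((((measurable_fst.comp measurable_snd).sub
          (measurable_snd.comp measurable_snd)).norm).pow measurable_const)).neg
  rw [hswap2]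
  -- Step 5 : kernel bound off the diagonal
  have hdiag : ν {p : Plane × Plane | p.1 = p.2} = 0 := by
    have hDm : MeasurableSet {p : Plane × Plane | p.1 = p.2} :=
      (isClosed_eq continuous_fst continuous_snd).measurableSet
    rw [hν, Measure.prod_apply hDm]
    have hpre : ∀ x : Plane, (Prod.mk x ⁻¹' {p : Plane × Plane | p.1 = p.2}) = {x} := by
      intro x
      ext y
      simp [eq_comm]
    calc ∫⁻ x, μ (Prod.mk x ⁻¹' {p : Plane × Plane | p.1 = p.2}) ∂μ
        = ∫⁻ _x, (0:ℝ≥0∞) ∂μ := by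
          apply lintegral_congr
          intro x
          rw [hpre x]
          exact aux_no_atom hβ0 hbd x
      _ = 0 := lintegral_zero
  have hae : ∀ᵐ p ∂ν, p.1 ≠ p.2 := by
    rw [MeasureTheory.ae_iff]
    simpa using hdiag
  have hker : ∀ᵐ p ∂ν, (∫⁻ t in Ioi (0:ℝ),
        ENNReal.ofReal (rexp (-t) * (π / t * rexp (-(π ^ 2 * ‖p.1 - p.2‖ ^ 2) / t))))
      ≤ c0 * ENNReal.ofReal (‖p.1 - p.2‖ ^ (-(β / 2))) := by
    filter_upwards [hae] with p hp
    have hd : 0 < ‖p.1 - p.2‖ := by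
      rw [norm_pos_iff]
      exact sub_ne_zero.mpr hp
    calc (∫⁻ t in Ioi (0:ℝ),
          ENNReal.ofReal (rexp (-t) * (π / t * rexp (-(π ^ 2 * ‖p.1 - p.2‖ ^ 2) / t))))
        ≤ ENNReal.ofReal (π * (π ^ 2 * ‖p.1 - p.2‖ ^ 2) ^ (-s)) * Γ :=
          aux_kernel_bound hs0 hs1 hd
      _ = c0 * ENNReal.ofReal (‖p.1 - p.2‖ ^ (-(β / 2))) := by
          have hds : ((‖p.1 - p.2‖ : ℝ) ^ 2) ^ (-s) = ‖p.1 - p.2‖ ^ (-(β / 2)) := by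
            rw [← Real.rpow_natCast ‖p.1 - p.2‖ 2, ← Real.rpow_mul (norm_nonneg _)]
            congr 1
            push_cast
            rw [hs]
            ring
          rw [Real.mul_rpow (by positivity) (by positivity), hds, ← mul_assoc,
            ENNReal.ofReal_mul (by positivity), hc0]
          ring
  -- Step 6 : conclusion via the energy bound
  have hfinal : (∫⁻ p : Plane × Plane, (∫⁻ t in Ioi (0:ℝ),
        ENNReal.ofReal (rexp (-t) * (π / t * rexp (-(π ^ 2 * ‖p.1 - p.2‖ ^ 2) / t)))) ∂ν)
      ≤ c0 * (E * μ univ) := by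
    calc (∫⁻ p : Plane × Plane, (∫⁻ t in Ioi (0:ℝ),
          ENNReal.ofReal (rexp (-t) * (π / t * rexp (-(π ^ 2 * ‖p.1 - p.2‖ ^ 2) / t)))) ∂ν)
        ≤ ∫⁻ p : Plane × Plane, c0 * ENNReal.ofReal (‖p.1 - p.2‖ ^ (-(β / 2))) ∂ν :=
          lintegral_mono_ae hker
      _ = c0 * ∫⁻ p : Plane × Plane, ENNReal.ofReal (‖p.1 - p.2‖ ^ (-(β / 2))) ∂ν :=
          lintegral_const_mul' _ _ hc0fin
      _ = c0 * ∫⁻ x : Plane, (∫⁻ y : Plane,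
            ENNReal.ofReal (‖x - y‖ ^ (-(β / 2))) ∂μ) ∂μ := by
          rw [hν, lintegral_prod]
          exact (ENNReal.measurable_ofReal.comp
            (((measurable_fst.sub measurable_snd).norm).pow measurable_const)).aemeasurable
      _ ≤ c0 * ∫⁻ _x : Plane, E ∂μ := by
          gcongr with x
          exact hEnergy x
      _ = c0 * (E * μ univ) := by rw [lintegral_const]
  apply lt_of_le_of_lt hfinal
  apply ENNReal.mul_lt_top (lt_top_iff_ne_top.mpr hc0fin)
  exact ENNReal.mul_lt_top hE (measure_lt_top μ univ)

/-- If `μ` is a finite nonnegative Borel measure on `ℝ²` supported in `closedBall 0 R₀`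
with `μ (closedBall 0 r) = c r^α` for all `0 ≤ r ≤ R₀` (where `α, c, R₀ > 0`), then
`μ ∈ H^{-1}(ℝ²)`, i.e. `∫ (1+|ξ|²)⁻¹ |μ̂(ξ)|² dξ < ∞`. -/
theorem memHminusOne_of_power_balls (α c R₀ : ℝ)
    (hα : 0 < α) (hc : 0 < c) (hR₀ : 0 < R₀)
    (μ : Measure Plane) [IsFiniteMeasure μ]
    (hsupp : μ (Metric.closedBall (0 : Plane) R₀)ᶜ = 0)
    (hball : ∀ r : ℝ, 0 ≤ r → r ≤ R₀ →
      μ (Metric.closedBall (0 : Plane) r) = ENNReal.ofReal (c * r ^ α)) :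
    memHminusOne μ := by
  unfold memHminusOne
  exact aux_main α c R₀ hα hc hR₀ μ hsupp hball
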